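/- There is no commutative semigroup S with zero whose zero-divisor graph is the following graph G: vertices {a, b, d, c₁, x₁, w, u, v} with edges a–b, a–d, b–d, a–c₁, b–c₁ (so N(c₁)={a,b}), d–w (w an end vertex adjacent to d), a–u (u an end vertex adjacent to a), b–v (v an end vertex adjacent to b). That is, the graph of Fig.4 with |C(a,b)| = 1, |U| = |V| = |W| = 1 is not a semigroup graph. -/

import Mathlib

/-- A commutative semigroup with zero element. -/
structure CommSemigroupWithZero : Type 1 where
  carrier : Type
  [toCommSemigroup : CommSemigroup carrier]
  [toZero : Zero carrier]
  zero_mul' : ∀ x : carrier, 0 * x = 0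

attribute [instance] CommSemigroupWithZero.toCommSemigroup CommSemigroupWithZero.toZero

/-- A zero-divisor: a nonzero element annihilated by some nonzero element. -/
def IsZeroDivisorElem {S : Type*} [Mul S] [Zero S] (x : S) : Prop :=
  x ≠ 0 ∧ ∃ y : S, y ≠ 0 ∧ x * y = 0

/-- The zero-divisor graph Γ(S). -/
def zdGraph (S : Type*) [CommSemigroup S] [Zero S] :
    SimpleGraph {x : S // IsZeroDivisorElem x} where
  Adj a b := a ≠ b ∧ (a : S) * (b : S) = 0
  symm := by
    constructor
    rintro a b ⟨h1, h2⟩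
    exact ⟨h1.symm, by rwa [mul_comm] at h2⟩
  loopless := by constructor; rintro a ⟨h, _⟩; exact h rfl

/-- The graph of Fig.4 with |C(a,b)| = |U| = |V| = |W| = 1, on vertices
0=a, 1=b, 2=d, 3=c₁, 4=x₁, 5=w, 6=u, 7=v, with edges a–b, a–d, b–d, a–c₁, b–c₁,
d–w, a–u, b–v. -/
def fig4Graph : SimpleGraph (Fin 8) :=
  SimpleGraph.fromEdgeSet
    {s(0,1), s(0,2), s(1,2), s(0,3), s(1,3), s(2,5), s(0,6), s(1,7)}

/-- The graph of Fig.4 with |C(a,b)| = |U| = |V| = |W| = 1 is not a semigroup graph. -/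
theorem fig4_not_semigroup_graph :
    ¬ ∃ T : CommSemigroupWithZero, Nonempty (fig4Graph ≃g zdGraph T.carrier) := by
  rintro ⟨T, ⟨e⟩⟩
  let f : Fin 8 → T.carrier := fun i => ((e i : {x : T.carrier // IsZeroDivisorElem x}) : T.carrier)
  have hmz : ∀ x : T.carrier, x * 0 = 0 := fun x => by rw [mul_comm]; exact T.zero_mul' x
  have hne : ∀ i, f i ≠ 0 := fun i => (e i).2.1
  have hadj : ∀ i j : Fin 8, fig4Graph.Adj i j → f i * f j = 0 := fun i j h => (e.map_adj_iff.mpr h).2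
  have hnadj : ∀ i j : Fin 8, ¬ fig4Graph.Adj i j → i ≠ j → f i * f j ≠ 0 := by
    intro i j h hij hz
    exact h (e.map_adj_iff.mp ⟨fun hc => hij (e.injective hc), hz⟩)
  have hsurj : ∀ z : T.carrier, IsZeroDivisorElem z → ∃ i : Fin 8, f i = z := by
    intro z hz
    refine ⟨e.symm ⟨z, hz⟩, ?_⟩
    show ((e (e.symm ⟨z, hz⟩) : {x : T.carrier // IsZeroDivisorElem x}) : T.carrier) = z
    rw [RelIso.apply_symm_apply]
  have e01 : f 0 * f 1 = 0 := hadj 0 1 (by simp only [fig4Graph, SimpleGraph.fromEdgeSet_adj, Set.mem_insert_iff, Set.mem_singleton_iff]; decide)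
  have e02 : f 0 * f 2 = 0 := hadj 0 2 (by simp only [fig4Graph, SimpleGraph.fromEdgeSet_adj, Set.mem_insert_iff, Set.mem_singleton_iff]; decide)
  have e12 : f 1 * f 2 = 0 := hadj 1 2 (by simp only [fig4Graph, SimpleGraph.fromEdgeSet_adj, Set.mem_insert_iff, Set.mem_singleton_iff]; decide)
  have e03 : f 0 * f 3 = 0 := hadj 0 3 (by simp only [fig4Graph, SimpleGraph.fromEdgeSet_adj, Set.mem_insert_iff, Set.mem_singleton_iff]; decide)
  have e13 : f 1 * f 3 = 0 := hadj 1 3 (by simp only [fig4Graph, SimpleGraph.fromEdgeSet_adj, Set.mem_insert_iff, Set.mem_singleton_iff]; decide)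
  have e25 : f 2 * f 5 = 0 := hadj 2 5 (by simp only [fig4Graph, SimpleGraph.fromEdgeSet_adj, Set.mem_insert_iff, Set.mem_singleton_iff]; decide)
  have e06 : f 0 * f 6 = 0 := hadj 0 6 (by simp only [fig4Graph, SimpleGraph.fromEdgeSet_adj, Set.mem_insert_iff, Set.mem_singleton_iff]; decide)
  have e17 : f 1 * f 7 = 0 := hadj 1 7 (by simp only [fig4Graph, SimpleGraph.fromEdgeSet_adj, Set.mem_insert_iff, Set.mem_singleton_iff]; decide)
  have e30 : f 3 * f 0 = 0 := by rw [mul_comm]; exact e03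
  have e31 : f 3 * f 1 = 0 := by rw [mul_comm]; exact e13
  have e60 : f 6 * f 0 = 0 := by rw [mul_comm]; exact e06
  have e71 : f 7 * f 1 = 0 := by rw [mul_comm]; exact e17
  have e52 : f 5 * f 2 = 0 := by rw [mul_comm]; exact e25
  have e10 : f 1 * f 0 = 0 := by rw [mul_comm]; exact e01
  have e20 : f 2 * f 0 = 0 := by rw [mul_comm]; exact e02
  have e21 : f 2 * f 1 = 0 := by rw [mul_comm]; exact e12
  have n07 : f 0 * f 7 ≠ 0 := hnadj 0 7 (by simp only [fig4Graph, SimpleGraph.fromEdgeSet_adj, Set.mem_insert_iff, Set.mem_singleton_iff]; decide) (by decide)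
  have n23 : f 2 * f 3 ≠ 0 := hnadj 2 3 (by simp only [fig4Graph, SimpleGraph.fromEdgeSet_adj, Set.mem_insert_iff, Set.mem_singleton_iff]; decide) (by decide)
  have n32 : f 3 * f 2 ≠ 0 := hnadj 3 2 (by simp only [fig4Graph, SimpleGraph.fromEdgeSet_adj, Set.mem_insert_iff, Set.mem_singleton_iff]; decide) (by decide)
  have n40 : f 4 * f 0 ≠ 0 := hnadj 4 0 (by simp only [fig4Graph, SimpleGraph.fromEdgeSet_adj, Set.mem_insert_iff, Set.mem_singleton_iff]; decide) (by decide)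
  have n41 : f 4 * f 1 ≠ 0 := hnadj 4 1 (by simp only [fig4Graph, SimpleGraph.fromEdgeSet_adj, Set.mem_insert_iff, Set.mem_singleton_iff]; decide) (by decide)
  have n50 : f 5 * f 0 ≠ 0 := hnadj 5 0 (by simp only [fig4Graph, SimpleGraph.fromEdgeSet_adj, Set.mem_insert_iff, Set.mem_singleton_iff]; decide) (by decide)
  have n51 : f 5 * f 1 ≠ 0 := hnadj 5 1 (by simp only [fig4Graph, SimpleGraph.fromEdgeSet_adj, Set.mem_insert_iff, Set.mem_singleton_iff]; decide) (by decide)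
  have n53 : f 5 * f 3 ≠ 0 := hnadj 5 3 (by simp only [fig4Graph, SimpleGraph.fromEdgeSet_adj, Set.mem_insert_iff, Set.mem_singleton_iff]; decide) (by decide)
  have n56 : f 5 * f 6 ≠ 0 := hnadj 5 6 (by simp only [fig4Graph, SimpleGraph.fromEdgeSet_adj, Set.mem_insert_iff, Set.mem_singleton_iff]; decide) (by decide)
  have n57 : f 5 * f 7 ≠ 0 := hnadj 5 7 (by simp only [fig4Graph, SimpleGraph.fromEdgeSet_adj, Set.mem_insert_iff, Set.mem_singleton_iff]; decide) (by decide)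
  have n61 : f 6 * f 1 ≠ 0 := hnadj 6 1 (by simp only [fig4Graph, SimpleGraph.fromEdgeSet_adj, Set.mem_insert_iff, Set.mem_singleton_iff]; decide) (by decide)
  have n16 : f 1 * f 6 ≠ 0 := hnadj 1 6 (by simp only [fig4Graph, SimpleGraph.fromEdgeSet_adj, Set.mem_insert_iff, Set.mem_singleton_iff]; decide) (by decide)
  have n26 : f 2 * f 6 ≠ 0 := hnadj 2 6 (by simp only [fig4Graph, SimpleGraph.fromEdgeSet_adj, Set.mem_insert_iff, Set.mem_singleton_iff]; decide) (by decide)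
  have n36 : f 3 * f 6 ≠ 0 := hnadj 3 6 (by simp only [fig4Graph, SimpleGraph.fromEdgeSet_adj, Set.mem_insert_iff, Set.mem_singleton_iff]; decide) (by decide)
  have n62 : f 6 * f 2 ≠ 0 := hnadj 6 2 (by simp only [fig4Graph, SimpleGraph.fromEdgeSet_adj, Set.mem_insert_iff, Set.mem_singleton_iff]; decide) (by decide)
  have n70 : f 7 * f 0 ≠ 0 := hnadj 7 0 (by simp only [fig4Graph, SimpleGraph.fromEdgeSet_adj, Set.mem_insert_iff, Set.mem_singleton_iff]; decide) (by decide)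
  have n72 : f 7 * f 2 ≠ 0 := hnadj 7 2 (by simp only [fig4Graph, SimpleGraph.fromEdgeSet_adj, Set.mem_insert_iff, Set.mem_singleton_iff]; decide) (by decide)
  have n73 : f 7 * f 3 ≠ 0 := hnadj 7 3 (by simp only [fig4Graph, SimpleGraph.fromEdgeSet_adj, Set.mem_insert_iff, Set.mem_singleton_iff]; decide) (by decide)
  -- Step 1: u * b = b
  have hub : f 6 * f 1 = f 1 := by
    have z1a : (f 6 * f 1) * f 0 = 0 := by rw [mul_assoc, e10, hmz]
    have z1c : (f 6 * f 1) * f 3 = 0 := by rw [mul_assoc, e13, hmz]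
    have z1d : (f 6 * f 1) * f 2 = 0 := by rw [mul_assoc, e12, hmz]
    have z1v : (f 6 * f 1) * f 7 = 0 := by rw [mul_assoc, e17, hmz]
    obtain ⟨k, hk⟩ := hsurj (f 6 * f 1) ⟨n61, f 0, hne 0, z1a⟩
    have hk8 : k = 0 ∨ k = 1 ∨ k = 2 ∨ k = 3 ∨ k = 4 ∨ k = 5 ∨ k = 6 ∨ k = 7 := by omega
    rcases hk8 with rfl|rfl|rfl|rfl|rfl|rfl|rfl|rfl
    · exact absurd (by rw [hk]; exact z1v) n07
    · exact hk.symm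
    · exact absurd (by rw [hk]; exact z1c) n23
    · exact absurd (by rw [hk]; exact z1d) n32
    · exact absurd (by rw [hk]; exact z1a) n40
    · exact absurd (by rw [hk]; exact z1a) n50
    · exact absurd (by rw [hk]; exact z1d) n62
    · exact absurd (by rw [hk]; exact z1a) n70
  -- Step 2: v * a = a
  have hva : f 7 * f 0 = f 0 := by
    have z2b : (f 7 * f 0) * f 1 = 0 := by rw [mul_assoc, e01, hmz]
    have z2c : (f 7 * f 0) * f 3 = 0 := by rw [mul_assoc, e03, hmz]
    have z2d : (f 7 * f 0) * f 2 = 0 := by rw [mul_assoc, e02, hmz]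
    have z2u : (f 7 * f 0) * f 6 = 0 := by rw [mul_assoc, e06, hmz]
    obtain ⟨k, hk⟩ := hsurj (f 7 * f 0) ⟨n70, f 1, hne 1, z2b⟩
    have hk8 : k = 0 ∨ k = 1 ∨ k = 2 ∨ k = 3 ∨ k = 4 ∨ k = 5 ∨ k = 6 ∨ k = 7 := by omega
    rcases hk8 with rfl|rfl|rfl|rfl|rfl|rfl|rfl|rfl
    · exact hk.symm
    · exact absurd (by rw [hk]; exact z2u) n16
    · exact absurd (by rw [hk]; exact z2c) n23
    · exact absurd (by rw [hk]; exact z2d) n32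
    · exact absurd (by rw [hk]; exact z2b) n41
    · exact absurd (by rw [hk]; exact z2b) n51
    · exact absurd (by rw [hk]; exact z2d) n62
    · exact absurd (by rw [hk]; exact z2c) n73
  -- Step 3: w * u = b
  have hwu : f 5 * f 6 = f 1 := by
    have z3a : (f 5 * f 6) * f 0 = 0 := by rw [mul_assoc, e60, hmz]
    have z3d : (f 5 * f 6) * f 2 = 0 := by rw [mul_comm (f 5) (f 6), mul_assoc, e52, hmz]
    have z3b : (f 5 * f 6) * f 1 ≠ 0 := by rw [mul_assoc, hub]; exact n51
    obtain ⟨k, hk⟩ := hsurj (f 5 * f 6) ⟨n56, f 0, hne 0, z3a⟩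
    have hk8 : k = 0 ∨ k = 1 ∨ k = 2 ∨ k = 3 ∨ k = 4 ∨ k = 5 ∨ k = 6 ∨ k = 7 := by omega
    rcases hk8 with rfl|rfl|rfl|rfl|rfl|rfl|rfl|rfl
    · exact absurd (by rw [← hk]; exact e01) z3b
    · exact hk.symm
    · exact absurd (by rw [← hk]; exact e21) z3b
    · exact absurd (by rw [hk]; exact z3d) n32
    · exact absurd (by rw [hk]; exact z3a) n40
    · exact absurd (by rw [hk]; exact z3a) n50
    · exact absurd (by rw [hk]; exact z3d) n62
    · exact absurd (by rw [hk]; exact z3a) n70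
  -- Step 4: w * v = a
  have hwv : f 5 * f 7 = f 0 := by
    have z4b : (f 5 * f 7) * f 1 = 0 := by rw [mul_assoc, e71, hmz]
    have z4d : (f 5 * f 7) * f 2 = 0 := by rw [mul_comm (f 5) (f 7), mul_assoc, e52, hmz]
    have z4a : (f 5 * f 7) * f 0 ≠ 0 := by rw [mul_assoc, hva]; exact n50
    obtain ⟨k, hk⟩ := hsurj (f 5 * f 7) ⟨n57, f 1, hne 1, z4b⟩
    have hk8 : k = 0 ∨ k = 1 ∨ k = 2 ∨ k = 3 ∨ k = 4 ∨ k = 5 ∨ k = 6 ∨ k = 7 := by omega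
    rcases hk8 with rfl|rfl|rfl|rfl|rfl|rfl|rfl|rfl
    · exact hk.symm
    · exact absurd (by rw [← hk]; exact e10) z4a
    · exact absurd (by rw [← hk]; exact e20) z4a
    · exact absurd (by rw [hk]; exact z4d) n32
    · exact absurd (by rw [hk]; exact z4b) n41
    · exact absurd (by rw [hk]; exact z4b) n51
    · exact absurd (by rw [hk]; exact z4b) n61
    · exact absurd (by rw [hk]; exact z4d) n72
  -- Final step: w * c annihilates a, b, u, v, so it cannot be any vertex
  have za : (f 5 * f 3) * f 0 = 0 := by rw [mul_assoc, e30, hmz]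
  have zb : (f 5 * f 3) * f 1 = 0 := by rw [mul_assoc, e31, hmz]
  have zu : (f 5 * f 3) * f 6 = 0 := by rw [mul_comm (f 5) (f 3), mul_assoc, hwu, e31]
  have zv : (f 5 * f 3) * f 7 = 0 := by rw [mul_comm (f 5) (f 3), mul_assoc, hwv, e30]
  obtain ⟨k, hk⟩ := hsurj (f 5 * f 3) ⟨n53, f 0, hne 0, za⟩
  have hk8 : k = 0 ∨ k = 1 ∨ k = 2 ∨ k = 3 ∨ k = 4 ∨ k = 5 ∨ k = 6 ∨ k = 7 := by omega
  rcases hk8 with rfl|rfl|rfl|rfl|rfl|rfl|rfl|rfl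
  · exact absurd (by rw [hk]; exact zv) n07
  · exact absurd (by rw [hk]; exact zu) n16
  · exact absurd (by rw [hk]; exact zu) n26
  · exact absurd (by rw [hk]; exact zu) n36
  · exact absurd (by rw [hk]; exact za) n40
  · exact absurd (by rw [hk]; exact za) n50
  · exact absurd (by rw [hk]; exact zb) n61
  · exact absurd (by rw [hk]; exact za) n70
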